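/- Let G(s) = N(s)A(s)N(s)ᵀ where N(s) = [[I_n, 0],[n₁(s), I_n]] with n₁(s) symmetric, and A(s) = diag(h(s), h(s)⁻¹) with h(s) symmetric positive definite, all differentiable in s. Then (1/2)tr((G'G⁻¹)²) = tr((h'h⁻¹)²) + tr(h·(n₁')ᵀ·h·n₁'). -/

import Mathlib

open Matrix

/-- Entrywise derivative of a matrix-valued function of a real variable. -/
noncomputable def matDeriv {m n : Type*} (f : ℝ → Matrix m n ℝ) (s : ℝ) : Matrix m n ℝ :=
  Matrix.of fun i j => deriv (fun t => f t i j) s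

section aux
variable {n : ℕ}

lemma det_diff (f : ℝ → Matrix (Fin n) (Fin n) ℝ) (hf : ∀ i j, Differentiable ℝ fun s => f s i j) :
    Differentiable ℝ fun s => (f s).det := by
  have : (fun s => (f s).det) = fun s =>
      ∑ σ : Equiv.Perm (Fin n), ((Equiv.Perm.sign σ : ℤ) : ℝ) * ∏ i, f s (σ i) i := by
    funext s
    rw [Matrix.det_apply]
    simp [Units.smul_def, zsmul_eq_mul]
  rw [this]
  apply Differentiable.fun_sum
  intro σ _
  exact ((Differentiable.fun_finset_prod (fun i _ => hf (σ i) i))).const_mul _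

lemma inv_diff (f : ℝ → Matrix (Fin n) (Fin n) ℝ) (hf : ∀ i j, Differentiable ℝ fun s => f s i j)
    (hdet : ∀ s, (f s).det ≠ 0) (i j : Fin n) :
    Differentiable ℝ fun s => (f s)⁻¹ i j := by
  have : (fun s => (f s)⁻¹ i j) = fun s => ((f s).det)⁻¹ * (f s).adjugate i j := by
    funext s
    rw [Matrix.inv_def]
    simp [Ring.inverse_eq_inv']
  rw [this]
  apply Differentiable.mul
  · exact (det_diff f hf).inv hdet
  · have : (fun s => (f s).adjugate i j)
        = fun s => ((f s).updateRow j (Pi.single i 1)).det := by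
      funext s; rw [Matrix.adjugate_apply]
    rw [this]
    apply det_diff
    intro k l
    rcases eq_or_ne k j with rfl | hk
    · simp [Matrix.updateRow_apply]
    · simpa [Matrix.updateRow_apply, hk] using hf k l

end aux

section calc1
variable {n : ℕ}

lemma entry_mul_diff (f g : ℝ → Matrix (Fin n) (Fin n) ℝ)
    (hf : ∀ i j, Differentiable ℝ fun s => f s i j)
    (hg : ∀ i j, Differentiable ℝ fun s => g s i j) (i j : Fin n) :
    Differentiable ℝ fun s => (f s * g s) i j := by
  simp only [Matrix.mul_apply]
  exact Differentiable.fun_sum fun k _ => (hf i k).mul (hg k j)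

lemma matDeriv_mul (f g : ℝ → Matrix (Fin n) (Fin n) ℝ)
    (hf : ∀ i j, Differentiable ℝ fun s => f s i j)
    (hg : ∀ i j, Differentiable ℝ fun s => g s i j) (s : ℝ) :
    matDeriv (fun t => f t * g t) s = matDeriv f s * g s + f s * matDeriv g s := by
  ext i j
  simp only [matDeriv, Matrix.of_apply, Matrix.add_apply, Matrix.mul_apply]
  have h1 : HasDerivAt (fun t => ∑ k, f t i k * g t k j)
      (∑ k, (deriv (fun t => f t i k) s * g s k j + f s i k * deriv (fun t => g t k j) s)) s := by
    apply HasDerivAt.fun_sum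
    intro k _
    exact ((hf i k s).hasDerivAt).mul ((hg k j s).hasDerivAt)
  rw [h1.deriv, Finset.sum_add_distrib]

lemma matDeriv_const (A : Matrix (Fin n) (Fin n) ℝ) (s : ℝ) :
    matDeriv (fun _ => A) s = 0 := by
  ext i j; simp [matDeriv]

lemma matDeriv_inv (f : ℝ → Matrix (Fin n) (Fin n) ℝ)
    (hf : ∀ i j, Differentiable ℝ fun s => f s i j)
    (hdet : ∀ s, IsUnit (f s).det) (s : ℝ) :
    matDeriv (fun t => (f t)⁻¹) s = -((f s)⁻¹ * matDeriv f s * (f s)⁻¹) := by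
  have hinv := inv_diff f hf (fun s => (hdet s).ne_zero)
  have h0 : matDeriv (fun t => f t * (f t)⁻¹) s = 0 := by
    rw [show (fun t => f t * (f t)⁻¹) = fun _ => (1 : Matrix (Fin n) (Fin n) ℝ) from
      funext fun t => Matrix.mul_nonsing_inv _ (hdet t)]
    exact matDeriv_const 1 s
  rw [matDeriv_mul f (fun t => (f t)⁻¹) hf hinv s] at h0
  have h2 : f s * matDeriv (fun t => (f t)⁻¹) s = -(matDeriv f s * (f s)⁻¹) := by
    linear_combination (norm := noncomm_ring) h0
  calc matDeriv (fun t => (f t)⁻¹) s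
      = (f s)⁻¹ * (f s * matDeriv (fun t => (f t)⁻¹) s) := by
        rw [Matrix.nonsing_inv_mul_cancel_left _ _ (hdet s)]
    _ = -((f s)⁻¹ * matDeriv f s * (f s)⁻¹) := by rw [h2]; noncomm_ring

lemma matDeriv_fromBlocks (a b c d : ℝ → Matrix (Fin n) (Fin n) ℝ) (s : ℝ) :
    matDeriv (fun t => Matrix.fromBlocks (a t) (b t) (c t) (d t)) s =
      Matrix.fromBlocks (matDeriv a s) (matDeriv b s) (matDeriv c s) (matDeriv d s) := by
  ext i j
  cases i <;> cases j <;> rfl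

end calc1

lemma matDeriv_add {n : ℕ} (f g : ℝ → Matrix (Fin n) (Fin n) ℝ)
    (hf : ∀ i j, Differentiable ℝ fun s => f s i j)
    (hg : ∀ i j, Differentiable ℝ fun s => g s i j) (s : ℝ) :
    matDeriv (fun t => f t + g t) s = matDeriv f s + matDeriv g s := by
  ext i j
  simp only [matDeriv, Matrix.of_apply, Matrix.add_apply]
  exact deriv_add (hf i j s) (hg i j s)

lemma trace_fromBlocks' {n : ℕ} (A B C D : Matrix (Fin n) (Fin n) ℝ) :
    (Matrix.fromBlocks A B C D).trace = A.trace + D.trace := by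
  simp [Matrix.trace, Matrix.diag, Fintype.sum_sum_type, Matrix.fromBlocks]

/-- for `G = N A Nᵀ` with `N = [[I,0],[n₁,I]]`, `n₁` symmetric, and
`A = diag(h, h⁻¹)`, `h` symmetric positive definite, all differentiable in `s`, one has
`(1/2)tr((G'G⁻¹)²) = tr((h'h⁻¹)²) + tr(h (n₁')ᵀ h n₁')`. -/
theorem stmt18 (n : ℕ)
    (h n₁ : ℝ → Matrix (Fin n) (Fin n) ℝ)
    (hdiff : ∀ i j, Differentiable ℝ fun s => h s i j)
    (n₁diff : ∀ i j, Differentiable ℝ fun s => n₁ s i j)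
    (hpos : ∀ s, (h s).PosDef) (hsymm : ∀ s, (h s)ᵀ = h s)
    (n₁symm : ∀ s, (n₁ s)ᵀ = n₁ s)
    (G : ℝ → Matrix (Fin n ⊕ Fin n) (Fin n ⊕ Fin n) ℝ)
    (hG : ∀ s, G s = Matrix.fromBlocks 1 0 (n₁ s) 1 *
      Matrix.fromBlocks (h s) 0 0 (h s)⁻¹ * (Matrix.fromBlocks 1 0 (n₁ s) 1)ᵀ)
    (s : ℝ) :
    (1 / 2 : ℝ) * (matDeriv G s * (G s)⁻¹ * (matDeriv G s * (G s)⁻¹)).trace =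
      (matDeriv h s * (h s)⁻¹ * (matDeriv h s * (h s)⁻¹)).trace +
      (h s * (matDeriv n₁ s)ᵀ * h s * matDeriv n₁ s).trace := by
  have detunit : ∀ t, IsUnit (h t).det := fun t =>
    isUnit_iff_ne_zero.mpr (hpos t).det_pos.ne'
  have dhi : ∀ i j, Differentiable ℝ fun t => (h t)⁻¹ i j :=
    inv_diff h hdiff fun t => (detunit t).ne_zero
  have hGfun : G = fun t => Matrix.fromBlocks (h t) (h t * n₁ t) (n₁ t * h t)
      (n₁ t * h t * n₁ t + (h t)⁻¹) := by
    funext t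
    rw [hG t]
    simp [Matrix.fromBlocks_transpose, Matrix.fromBlocks_multiply, n₁symm t, Matrix.mul_assoc]
  set H := h s with hH
  set Hi := (h s)⁻¹ with hHi
  set K := n₁ s with hK
  set H' := matDeriv h s with hH'
  set K' := matDeriv n₁ s with hK'
  have K'symm : K'ᵀ = K' := by
    ext i j
    simp only [hK', matDeriv, Matrix.transpose_apply, Matrix.of_apply]
    congr 1
    funext t
    conv_lhs => rw [← n₁symm t]
    rfl
  -- derivative of G
  have hGd : matDeriv G s = Matrix.fromBlocks H' (H' * K + H * K') (K' * H + K * H')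
      ((K' * H + K * H') * K + (K * H) * K' + -(Hi * H' * Hi)) := by
    rw [hGfun, matDeriv_fromBlocks]
    rw [matDeriv_mul h n₁ hdiff n₁diff s, matDeriv_mul n₁ h n₁diff hdiff s]
    rw [matDeriv_add (fun t => n₁ t * h t * n₁ t) (fun t => (h t)⁻¹)
      (fun i j => entry_mul_diff _ _ (fun i j => entry_mul_diff _ _ n₁diff hdiff i j) n₁diff i j)
      dhi s]
    rw [matDeriv_mul (fun t => n₁ t * h t) n₁ (fun i j => entry_mul_diff _ _ n₁diff hdiff i j)
      n₁diff s, matDeriv_mul n₁ h n₁diff hdiff s, matDeriv_inv h hdiff detunit s]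
  -- inverse of G
  have hGinv : (G s)⁻¹ = Matrix.fromBlocks (Hi + K * H * K) (-(K * H)) (-(H * K)) H := by
    apply Matrix.inv_eq_right_inv
    rw [hGfun]
    rw [Matrix.fromBlocks_multiply, ← Matrix.fromBlocks_one]
    rw [show h s * (Hi + K * H * K) + h s * n₁ s * -(H * K) = 1 by
      rw [← hH, ← hK]
      rw [mul_add, Matrix.mul_nonsing_inv _ (detunit s)]
      noncomm_ring]
    rw [show h s * -(K * H) + h s * n₁ s * H = 0 by
      rw [← hH, ← hK]; noncomm_ring]
    rw [show n₁ s * h s * (Hi + K * H * K) + (n₁ s * h s * n₁ s + Hi) * -(H * K) = 0 by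
      rw [← hH, ← hK]
      have e1 : K * H * Hi = K := Matrix.mul_nonsing_inv_cancel_right _ _ (detunit s)
      have e2 : Hi * (H * K) = K := Matrix.nonsing_inv_mul_cancel_left _ _ (detunit s)
      rw [mul_add, e1, mul_neg, add_mul, ← Matrix.mul_assoc, e2]
      noncomm_ring]
    rw [show n₁ s * h s * -(K * H) + (n₁ s * h s * n₁ s + Hi) * H = 1 by
      rw [← hH, ← hK]
      rw [add_mul, Matrix.nonsing_inv_mul _ (detunit s)]
      noncomm_ring]
  have c1 : H * Hi = 1 := Matrix.mul_nonsing_inv _ (detunit s)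
  have c2 : Hi * H = 1 := Matrix.nonsing_inv_mul _ (detunit s)
  have c3 : ∀ x : Matrix (Fin n) (Fin n) ℝ, Hi * (H * x) = x :=
    fun x => Matrix.nonsing_inv_mul_cancel_left _ _ (detunit s)
  have c4 : ∀ x : Matrix (Fin n) (Fin n) ℝ, H * (Hi * x) = x :=
    fun x => Matrix.mul_nonsing_inv_cancel_left _ _ (detunit s)
  rw [hGd, hGinv, K'symm]
  simp only [Matrix.fromBlocks_multiply, trace_fromBlocks', mul_add, add_mul, mul_neg,
    neg_mul, neg_neg, neg_add, Matrix.trace_add, Matrix.trace_neg, Matrix.mul_assoc,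
    c1, c2, c3, c4, mul_one, one_mul]
  have e1 : (Hi * (H' * (Hi * H'))).trace = (H' * (Hi * (H' * Hi))).trace := by
    rw [Matrix.trace_mul_comm Hi (H' * (Hi * H')), Matrix.mul_assoc, Matrix.mul_assoc]
  have e2 : (K' * (H * (K' * H))).trace = (H * (K' * (H * K'))).trace := by
    rw [Matrix.trace_mul_comm K' (H * (K' * H)), Matrix.mul_assoc, Matrix.mul_assoc]
  have e3 : (K * (H' * (K' * H))).trace = (H' * (K' * (H * K))).trace := by
    rw [Matrix.trace_mul_comm K (H' * (K' * H)), Matrix.mul_assoc, Matrix.mul_assoc]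
  have e4 : (K * (H * (K' * H'))).trace = (H * (K' * (H' * K))).trace := by
    rw [Matrix.trace_mul_comm K (H * (K' * H')), Matrix.mul_assoc, Matrix.mul_assoc]
  linear_combination (1/2 : ℝ) * e1 + (1/2 : ℝ) * e2 + (1/2 : ℝ) * e3 - (1/2 : ℝ) * e4
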